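/- For all d, n ≥ 2 and m ≥ 0, the level-m vertex set of the Vicsek set V_n^d satisfies #V_m = (2^d·n − 2^d + 1)^m·(2^d − 1) + 1. -/

import Mathlib

/-- Contraction maps of the Vicsek i.f.s. in dimension `d` with parameter `n`,
indexed by a corner `q` of the unit cube and `j ∈ {1,…,n}`. -/
noncomputable def vicsekF (d n : ℕ) (q : Fin d → ℝ) (j : ℕ) (x : Fin d → ℝ) : Fin d → ℝ :=
  fun i => x i / (2 * n - 1) + ((2 * n - 2) / (2 * n - 1)) *
    ((((n : ℝ) - j) / ((n : ℝ) - 1)) * q i + (((j : ℝ) - 1) / ((n : ℝ) - 1)) * (1 / 2))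

/-- The corners of the unit cube `{0,1}^d`. -/
def vicsekCorners (d : ℕ) : Set (Fin d → ℝ) := {x | ∀ i, x i = 0 ∨ x i = 1}

/-- The level-`m` vertex set of the Vicsek set. -/
noncomputable def vicsekV (d n : ℕ) : ℕ → Set (Fin d → ℝ)
  | 0 => vicsekCorners d
  | m + 1 => ⋃ q ∈ vicsekCorners d, ⋃ j ∈ Finset.Icc 1 n, vicsekF d n q j '' vicsekV d n m

namespace VicsekAux

noncomputable def cval (n : ℕ) {d : ℕ} (q : Fin d → ℝ) (j : ℕ) (i : Fin d) : ℝ :=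
  2 * ((n : ℝ) - j) * q i + ((j : ℝ) - 1)

variable {d n : ℕ}

lemma n1_ne (hn : 2 ≤ n) : ((n : ℝ) - 1) ≠ 0 := by
  have : (2:ℝ) ≤ n := by exact_mod_cast hn
  nlinarith

lemma s_pos (hn : 2 ≤ n) : (0:ℝ) < 2 * n - 1 := by
  have : (2:ℝ) ≤ n := by exact_mod_cast hn
  nlinarith

lemma vicsekF_eq (hn : 2 ≤ n) (q : Fin d → ℝ) (j : ℕ) (x : Fin d → ℝ) (i : Fin d) :
    vicsekF d n q j x i = (x i + cval n q j i) / (2 * n - 1) := by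
  have h1 := n1_ne hn
  have h2 := (s_pos hn).ne'
  unfold vicsekF cval
  field_simp

lemma cval_succ (q : Fin d → ℝ) (j : ℕ) (i : Fin d) :
    cval n q (j + 1) i = cval n q j i + 1 - 2 * q i := by
  unfold cval; push_cast; ring

lemma cval_zero {q : Fin d → ℝ} {i : Fin d} (h : q i = 0) (j : ℕ) :
    cval n q j i = (j : ℝ) - 1 := by unfold cval; rw [h]; ring

lemma cval_one {q : Fin d → ℝ} {i : Fin d} (h : q i = 1) (j : ℕ) :
    cval n q j i = 2 * (n : ℝ) - j - 1 := by unfold cval; rw [h]; ring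

lemma cval_bounds (hn : 2 ≤ n) {q : Fin d → ℝ} (hq : q ∈ vicsekCorners d)
    {j : ℕ} (hj1 : 1 ≤ j) (hjn : j ≤ n) (i : Fin d) :
    0 ≤ cval n q j i ∧ cval n q j i + 1 ≤ 2 * n - 1 := by
  have hj1' : (1:ℝ) ≤ j := by exact_mod_cast hj1
  have hjn' : (j:ℝ) ≤ n := by exact_mod_cast hjn
  rcases hq i with h | h
  · rw [cval_zero h]; constructor <;> nlinarith
  · rw [cval_one h]; constructor <;> nlinarith

/-- membership in a cell gives the block bounds -/
lemma mem_cell_bounds (hn : 2 ≤ n) {m : ℕ} {q : Fin d → ℝ} (hq : q ∈ vicsekCorners d)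
    (hmem : ∀ y ∈ vicsekV d n m, ∀ i, 0 ≤ y i ∧ y i ≤ 1)
    {j : ℕ} {x : Fin d → ℝ} (hx : x ∈ vicsekF d n q j '' vicsekV d n m) (i : Fin d) :
    cval n q j i / (2 * n - 1) ≤ x i ∧ x i ≤ (cval n q j i + 1) / (2 * n - 1) := by
  obtain ⟨y, hy, rfl⟩ := hx
  have hs := s_pos (n := n) hn
  have hyi := hmem y hy i
  rw [vicsekF_eq hn]
  constructor
  · exact (div_le_div_iff_of_pos_right hs).mpr (by linarith [hyi.1])
  · exact (div_le_div_iff_of_pos_right hs).mpr (by linarith [hyi.2])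


lemma vmem_Icc (hn : 2 ≤ n) (m : ℕ) : ∀ y ∈ vicsekV d n m, ∀ i, 0 ≤ y i ∧ y i ≤ 1 := by
  induction m with
  | zero =>
    intro y hy i
    rcases hy i with h | h <;> rw [h] <;> norm_num
  | succ m ih =>
    intro y hy i
    rw [vicsekV] at hy
    simp only [Set.mem_iUnion] at hy
    obtain ⟨q, hq, j, hj, hy⟩ := hy
    rw [Finset.mem_Icc] at hj
    have hb := mem_cell_bounds hn hq ih hy i
    have hc := cval_bounds hn hq hj.1 hj.2 i
    have hs := s_pos (n := n) hn
    constructor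
    · have : (0:ℝ) ≤ cval n q j i / (2 * n - 1) := div_nonneg hc.1 hs.le
      linarith [hb.1]
    · have : (cval n q j i + 1) / (2 * n - 1) ≤ 1 := by
        rw [div_le_one hs]; linarith [hc.2]
      linarith [hb.2]

lemma one_sub_corner {q : Fin d → ℝ} (hq : q ∈ vicsekCorners d) :
    (fun i => 1 - q i) ∈ vicsekCorners d := by
  intro i
  rcases hq i with h | h <;> simp [h]

lemma corners_subset (hn : 2 ≤ n) (m : ℕ) : vicsekCorners d ⊆ vicsekV d n m := by
  induction m with
  | zero => exact fun q hq => hq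
  | succ m ih =>
    intro q hq
    rw [vicsekV]
    simp only [Set.mem_iUnion]
    refine ⟨q, hq, 1, by rw [Finset.mem_Icc]; omega, q, ih hq, ?_⟩
    funext i
    rw [vicsekF_eq hn]
    have hs := (s_pos (n := n) hn).ne'
    rcases hq i with h | h
    · rw [h, cval_zero h]; push_cast; norm_num
    · rw [h, cval_one h]; push_cast; field_simp; ring

lemma corners_finite : (vicsekCorners d).Finite := by
  have : vicsekCorners d ⊆ Set.pi Set.univ (fun _ : Fin d => ({0, 1} : Set ℝ)) := by
    intro x hx
    rw [Set.mem_pi]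
    intro i _
    rcases hx i with h | h <;> simp [h]
  exact (Set.Finite.pi (fun _ => (Set.finite_singleton (1:ℝ)).insert 0)).subset this

lemma v_finite (m : ℕ) : (vicsekV d n m).Finite := by
  induction m with
  | zero => exact corners_finite
  | succ m ih =>
    rw [vicsekV]
    refine Set.Finite.biUnion corners_finite (fun q _ => ?_)
    exact Set.Finite.biUnion (Finset.Icc 1 n).finite_toSet (fun j _ => ih.image _)

lemma vF_injective (hn : 2 ≤ n) (q : Fin d → ℝ) (j : ℕ) :
    Function.Injective (vicsekF d n q j) := by
  intro x y hxy
  have hs := (s_pos (n := n) hn).ne'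
  funext i
  have := congrFun hxy i
  rw [vicsekF_eq hn, vicsekF_eq hn, div_eq_div_iff hs hs] at this
  have hs2 := s_pos (n := n) hn
  nlinarith [this]

lemma cell_ncard (hn : 2 ≤ n) (q : Fin d → ℝ) (j m : ℕ) :
    (vicsekF d n q j '' vicsekV d n m).ncard = (vicsekV d n m).ncard :=
  Set.ncard_image_of_injective _ (vF_injective hn q j)


noncomputable def jp (n : ℕ) {d : ℕ} (q : Fin d → ℝ) (j : ℕ) : Fin d → ℝ :=
  vicsekF d n q j (fun i => 1 - q i)

lemma jp_mem_left (hn : 2 ≤ n) {q : Fin d → ℝ} (hq : q ∈ vicsekCorners d) (m j : ℕ) :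
    jp n q j ∈ vicsekF d n q j '' vicsekV d n m :=
  ⟨_, corners_subset hn m (one_sub_corner hq), rfl⟩

lemma jp_eq_right (hn : 2 ≤ n) (q : Fin d → ℝ) (j : ℕ) :
    jp n q j = vicsekF d n q (j + 1) q := by
  funext i
  show vicsekF d n q j (fun i => 1 - q i) i = _
  rw [vicsekF_eq hn, vicsekF_eq hn, cval_succ]
  ring_nf

lemma jp_mem_right (hn : 2 ≤ n) {q : Fin d → ℝ} (hq : q ∈ vicsekCorners d) (m j : ℕ) :
    jp n q j ∈ vicsekF d n q (j + 1) '' vicsekV d n m := by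
  rw [jp_eq_right hn]
  exact ⟨q, corners_subset hn m hq, rfl⟩

lemma inter_pin (hn : 2 ≤ n) {m : ℕ} {q : Fin d → ℝ} (hq : q ∈ vicsekCorners d)
    {j : ℕ} {x : Fin d → ℝ}
    (h1 : x ∈ vicsekF d n q j '' vicsekV d n m)
    (h2 : x ∈ vicsekF d n q (j + 1) '' vicsekV d n m) :
    x = jp n q j := by
  funext i
  have hs := s_pos (n := n) hn
  have b1 := mem_cell_bounds hn hq (vmem_Icc hn m) h1 i
  have b2 := mem_cell_bounds hn hq (vmem_Icc hn m) h2 i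
  rw [cval_succ] at b2
  have hjp : jp n q j i = (1 - q i + cval n q j i) / (2 * n - 1) := by
    show vicsekF d n q j (fun i => 1 - q i) i = _
    rw [vicsekF_eq hn]
  rw [hjp]
  rcases hq i with h | h
  · have e1 : cval n q j i + 1 = 1 - q i + cval n q j i := by rw [h]; ring
    have e2 : cval n q j i + 1 - 2 * q i = 1 - q i + cval n q j i := by rw [h]; ring
    rw [e1] at b1
    rw [e2] at b2
    exact le_antisymm b1.2 b2.1
  · have e1 : cval n q j i = 1 - q i + cval n q j i := by rw [h]; ring
    have e2 : cval n q j i + 1 - 2 * q i + 1 = 1 - q i + cval n q j i := by rw [h]; ring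
    rw [e1] at b1
    rw [e2] at b2
    exact le_antisymm b2.2 b1.1

lemma not_both (hn : 2 ≤ n) {m : ℕ} {q q' : Fin d → ℝ}
    (hq : q ∈ vicsekCorners d) (hq' : q' ∈ vicsekCorners d) {j j' : ℕ} {x : Fin d → ℝ}
    (i : Fin d)
    (hgap : cval n q j i + 2 ≤ cval n q' j' i ∨ cval n q' j' i + 2 ≤ cval n q j i)
    (h1 : x ∈ vicsekF d n q j '' vicsekV d n m)
    (h2 : x ∈ vicsekF d n q' j' '' vicsekV d n m) : False := by
  have hs := s_pos (n := n) hn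
  have b1 := mem_cell_bounds hn hq (vmem_Icc hn m) h1 i
  have b2 := mem_cell_bounds hn hq' (vmem_Icc hn m) h2 i
  rcases hgap with hgap | hgap
  · have := (div_le_div_iff_of_pos_right hs).mp (b2.1.trans b1.2)
    linarith
  · have := (div_le_div_iff_of_pos_right hs).mp (b1.1.trans b2.2)
    linarith

lemma center_eq (hn : 2 ≤ n) (q q' : Fin d → ℝ) :
    vicsekF d n q n = vicsekF d n q' n := by
  funext x i
  unfold vicsekF
  rw [sub_self]
  simp

lemma corner_ne_coord {q q' : Fin d → ℝ} (h : q ≠ q') : ∃ i, q i ≠ q' i := by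
  by_contra hc
  push_neg at hc
  exact h (funext hc)

/-- master intersection lemma: cells at levels `j < j'` intersect at most in `jp q j`. -/
lemma inter_subset_jp (hd : 1 ≤ d) (hn : 2 ≤ n) {m : ℕ} {q q' : Fin d → ℝ}
    (hq : q ∈ vicsekCorners d) (hq' : q' ∈ vicsekCorners d) {j j' : ℕ}
    (hj1 : 1 ≤ j) (hjj' : j < j') (hj'n : j' ≤ n) {x : Fin d → ℝ}
    (h1 : x ∈ vicsekF d n q j '' vicsekV d n m)
    (h2 : x ∈ vicsekF d n q' j' '' vicsekV d n m) :
    x = jp n q j := by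
  -- first handle the case j' = n by replacing q' with q
  have key : ∀ j'', j < j'' → j'' ≤ n → x ∈ vicsekF d n q j'' '' vicsekV d n m → x = jp n q j := by
    intro j'' hlt hle h2'
    rcases eq_or_lt_of_le (Nat.succ_le_of_lt hlt) with he | hgt
    · rw [← he] at h2'
      exact inter_pin hn hq h1 h2'
    · -- j + 2 ≤ j'' : disjoint, contradiction
      exfalso
      set i : Fin d := ⟨0, hd⟩
      refine not_both hn hq hq i ?_ h1 h2'
      have hc : (j:ℝ) + 2 ≤ (j'':ℝ) := by exact_mod_cast hgt
      rcases hq i with h | h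
      · left; rw [cval_zero h, cval_zero h]; linarith
      · right; rw [cval_one h, cval_one h]; linarith
  rcases eq_or_ne j' n with rfl | hj'ltn
  · rw [center_eq hn q' q] at h2
    exact key _ hjj' hj'n h2
  · rcases eq_or_ne q' q with rfl | hne
    · exact key _ hjj' hj'n h2
    · -- q ≠ q', j' < n : disjoint, contradiction
      exfalso
      obtain ⟨i, hi⟩ := corner_ne_coord (Ne.symm hne)
      refine not_both hn hq hq' i ?_ h1 h2
      have hj'n' : j' ≤ n - 1 := by omega
      have hjr : (1:ℝ) ≤ j := by exact_mod_cast hj1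
      have hj'r : (j':ℝ) ≤ (n:ℝ) - 1 := by
        have : (j':ℝ) ≤ ((n - 1 : ℕ) : ℝ) := by exact_mod_cast hj'n'
        have h2n : ((n - 1 : ℕ) : ℝ) = (n:ℝ) - 1 := by
          have : (1:ℕ) ≤ n := by omega
          push_cast [this]
          ring
        linarith [this, h2n.le]
      have hjj'r : (j:ℝ) < j' := by exact_mod_cast hjj'
      rcases hq i with h | h
      · rcases hq' i with h' | h'
        · exact absurd (h.trans h'.symm) hi
        · left; rw [cval_zero h, cval_one h']; linarith
      · rcases hq' i with h' | h'
        · right; rw [cval_one h, cval_zero h']; linarith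
        · exact absurd (h.trans h'.symm) hi

/-- same level, different corners: disjoint -/
lemma same_level_disjoint (hn : 2 ≤ n) {m : ℕ} {q q' : Fin d → ℝ}
    (hq : q ∈ vicsekCorners d) (hq' : q' ∈ vicsekCorners d) {j : ℕ}
    (hj1 : 1 ≤ j) (hjn : j + 1 ≤ n) (hne : q ≠ q') {x : Fin d → ℝ}
    (h1 : x ∈ vicsekF d n q j '' vicsekV d n m)
    (h2 : x ∈ vicsekF d n q' j '' vicsekV d n m) : False := by
  obtain ⟨i, hi⟩ := corner_ne_coord hne
  refine not_both hn hq hq' i ?_ h1 h2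
  have hjr : (j:ℝ) + 1 ≤ n := by exact_mod_cast hjn
  rcases hq i with h | h
  · rcases hq' i with h' | h'
    · exact absurd (h.trans h'.symm) hi
    · left; rw [cval_zero h, cval_one h']; linarith
  · rcases hq' i with h' | h'
    · right; rw [cval_one h, cval_zero h']; linarith
    · exact absurd (h.trans h'.symm) hi


/-- partial unions: cells with level `≥ j` -/
noncomputable def U (d n m j : ℕ) : Set (Fin d → ℝ) :=
  ⋃ q ∈ vicsekCorners d, ⋃ j' ∈ Finset.Icc j n, vicsekF d n q j' '' vicsekV d n m

lemma v_succ_eq_U (m : ℕ) : vicsekV d n (m + 1) = U d n m 1 := by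
  rw [vicsekV]; rfl

lemma U_finite (m j : ℕ) : (U d n m j).Finite := by
  refine Set.Finite.biUnion corners_finite (fun q _ => ?_)
  exact Set.Finite.biUnion (Finset.Icc j n).finite_toSet (fun j' _ => (v_finite m).image _)

def cornerFun (d : ℕ) (b : Fin d → Bool) : Fin d → ℝ := fun i => if b i then 1 else 0

lemma cornerFun_mem (b : Fin d → Bool) : cornerFun d b ∈ vicsekCorners d := by
  intro i
  unfold cornerFun
  by_cases h : b i <;> simp [h]

lemma cornerFun_injective : Function.Injective (cornerFun d) := by
  intro b b' h
  funext i
  have := congrFun h i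
  unfold cornerFun at this
  cases hb : b i <;> cases hb' : b' i <;> rw [hb, hb'] at this <;> simp_all <;> norm_num at this

lemma corners_eq_range : vicsekCorners d = Set.range (cornerFun d) := by
  ext x
  constructor
  · intro hx
    refine ⟨fun i => decide (x i = 1), ?_⟩
    funext i
    unfold cornerFun
    rcases hx i with h | h <;> simp [h]
  · rintro ⟨b, rfl⟩
    exact cornerFun_mem b

lemma corners_ncard : (vicsekCorners d).ncard = 2 ^ d := by
  rw [corners_eq_range, ← Set.image_univ,
    Set.ncard_image_of_injective _ cornerFun_injective, Set.ncard_univ,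
    Nat.card_eq_fintype_card, Fintype.card_fun]
  simp

lemma ncard_union_inter_singleton {X : Type*} {B A : Set X} (hB : B.Finite) (hA : A.Finite)
    {p : X} (h : A ∩ B = {p}) : (B ∪ A).ncard + 1 = B.ncard + A.ncard := by
  have h2 := Set.ncard_union_add_ncard_inter B A hB hA
  rw [Set.inter_comm, h, Set.ncard_singleton] at h2
  exact h2

lemma step_lemma (hd : 1 ≤ d) (hn : 2 ≤ n) (m : ℕ) {j : ℕ} (hj1 : 1 ≤ j) (hjn : j + 1 ≤ n)
    (T : Finset (Fin d → Bool)) :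
    (U d n m (j + 1) ∪ ⋃ b ∈ T, vicsekF d n (cornerFun d b) j '' vicsekV d n m).ncard + T.card
      = (U d n m (j + 1)).ncard + T.card * (vicsekV d n m).ncard := by
  classical
  induction T using Finset.induction_on with
  | empty => simp
  | insert b T hb ih =>
    rw [Finset.set_biUnion_insert]
    set A := vicsekF d n (cornerFun d b) j '' vicsekV d n m with hA
    set R := ⋃ b' ∈ T, vicsekF d n (cornerFun d b') j '' vicsekV d n m with hR
    have hre : U d n m (j + 1) ∪ (A ∪ R) = (U d n m (j + 1) ∪ R) ∪ A := by
      rw [Set.union_comm A R, ← Set.union_assoc]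
    rw [hre]
    have hq := cornerFun_mem (d := d) b
    have hAB : A ∩ (U d n m (j + 1) ∪ R) = {jp n (cornerFun d b) j} := by
      apply Set.Subset.antisymm
      · rintro x ⟨hxA, hxB⟩
        rcases hxB with hxU | hxR
        · simp only [U, Set.mem_iUnion] at hxU
          obtain ⟨q', hq', j', hj', hx'⟩ := hxU
          rw [Finset.mem_Icc] at hj'
          exact inter_subset_jp hd hn hq hq' hj1 (by omega) hj'.2 hxA hx'
        · simp only [hR, Set.mem_iUnion] at hxR
          obtain ⟨b', hb', hx'⟩ := hxR
          have hneb : cornerFun d b ≠ cornerFun d b' := by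
            intro hcc
            exact hb (cornerFun_injective hcc ▸ hb')
          exact absurd (same_level_disjoint hn hq (cornerFun_mem b') hj1 hjn hneb hxA hx') not_false
      · rw [Set.singleton_subset_iff]
        refine ⟨jp_mem_left hn hq m j, Or.inl ?_⟩
        simp only [U, Set.mem_iUnion]
        exact ⟨cornerFun d b, hq, j + 1, by rw [Finset.mem_Icc]; omega, jp_mem_right hn hq m j⟩
    have hBfin : (U d n m (j + 1) ∪ R).Finite := by
      refine (U_finite m (j + 1)).union ?_
      exact Set.Finite.biUnion T.finite_toSet (fun b' _ => (v_finite m).image _)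
    have hAfin : A.Finite := (v_finite m).image _
    have key := ncard_union_inter_singleton hBfin hAfin hAB
    have hAcard : A.ncard = (vicsekV d n m).ncard := cell_ncard hn _ _ _
    rw [Finset.card_insert_of_notMem hb]
    calc ((U d n m (j + 1) ∪ R) ∪ A).ncard + (T.card + 1)
        = (((U d n m (j + 1) ∪ R) ∪ A).ncard + 1) + T.card := by ring
      _ = ((U d n m (j + 1) ∪ R).ncard + A.ncard) + T.card := by rw [key]
      _ = ((U d n m (j + 1) ∪ R).ncard + T.card) + (vicsekV d n m).ncard := by rw [hAcard]; ring
      _ = ((U d n m (j + 1)).ncard + T.card * (vicsekV d n m).ncard) + (vicsekV d n m).ncard := by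
          rw [ih]
      _ = (U d n m (j + 1)).ncard + (T.card + 1) * (vicsekV d n m).ncard := by ring

lemma U_split (hn : 2 ≤ n) (m : ℕ) {j : ℕ} (hjn : j + 1 ≤ n) :
    U d n m j = U d n m (j + 1) ∪ ⋃ b ∈ (Finset.univ : Finset (Fin d → Bool)),
      vicsekF d n (cornerFun d b) j '' vicsekV d n m := by
  ext x
  simp only [U, Set.mem_iUnion, Set.mem_union, Finset.mem_Icc, Finset.mem_univ, exists_true_left,
    Set.iUnion_true]
  constructor
  · rintro ⟨q, hq, j', ⟨hle, hle'⟩, hx⟩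
    rcases eq_or_lt_of_le hle with rfl | hlt
    · right
      rw [corners_eq_range] at hq
      obtain ⟨b, rfl⟩ := hq
      exact ⟨b, hx⟩
    · exact Or.inl ⟨q, hq, j', ⟨hlt, hle'⟩, hx⟩
  · rintro (⟨q, hq, j', ⟨hle, hle'⟩, hx⟩ | ⟨b, hx⟩)
    · exact ⟨q, hq, j', ⟨by omega, hle'⟩, hx⟩
    · exact ⟨cornerFun d b, cornerFun_mem b, j, ⟨le_refl _, by omega⟩, hx⟩

lemma level_step (hd : 1 ≤ d) (hn : 2 ≤ n) (m : ℕ) {j : ℕ} (hj1 : 1 ≤ j) (hjn : j + 1 ≤ n) :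
    (U d n m j).ncard + 2 ^ d = (U d n m (j + 1)).ncard + 2 ^ d * (vicsekV d n m).ncard := by
  have hcard : (Finset.univ : Finset (Fin d → Bool)).card = 2 ^ d := by
    rw [Finset.card_univ, Fintype.card_fun]
    simp
  rw [U_split hn m hjn, ← hcard]
  exact step_lemma hd hn m hj1 hjn _

lemma U_top (hn : 2 ≤ n) (m : ℕ) : (U d n m n).ncard = (vicsekV d n m).ncard := by
  have hq0 : (fun _ : Fin d => (0:ℝ)) ∈ vicsekCorners d := fun i => Or.inl rfl
  have : U d n m n = vicsekF d n (fun _ => 0) n '' vicsekV d n m := by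
    ext x
    simp only [U, Set.mem_iUnion, Finset.mem_Icc]
    constructor
    · rintro ⟨q, hq, j', ⟨hle, hle'⟩, hx⟩
      have : j' = n := le_antisymm hle' hle
      subst this
      rw [center_eq hn q (fun _ => 0)] at hx
      exact hx
    · intro hx
      exact ⟨(fun _ => 0), hq0, n, ⟨le_refl _, le_refl _⟩, hx⟩
  rw [this]
  exact cell_ncard hn _ _ _

lemma main_rec (hd : 1 ≤ d) (hn : 2 ≤ n) (m : ℕ) :
    (vicsekV d n (m + 1)).ncard + (n - 1) * 2 ^ d
      = (vicsekV d n m).ncard + (n - 1) * (2 ^ d * (vicsekV d n m).ncard) := by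
  set a := (vicsekV d n m).ncard with ha
  have key : ∀ k, k ≤ n - 1 → (U d n m (n - k)).ncard + k * 2 ^ d = a + k * (2 ^ d * a) := by
    intro k
    induction k with
    | zero => intro _; simpa using U_top hn m
    | succ k ihk =>
      intro hk
      have hk' : k ≤ n - 1 := by omega
      have ih := ihk hk'
      have hj1 : 1 ≤ n - (k + 1) := by omega
      have hjn : (n - (k + 1)) + 1 ≤ n := by omega
      have hstep := level_step hd hn m hj1 hjn
      have hjj : (n - (k + 1)) + 1 = n - k := by omega
      rw [hjj] at hstep
      calc (U d n m (n - (k + 1))).ncard + (k + 1) * 2 ^ d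
          = ((U d n m (n - (k + 1))).ncard + 2 ^ d) + k * 2 ^ d := by ring
        _ = ((U d n m (n - k)).ncard + 2 ^ d * a) + k * 2 ^ d := by rw [hstep]
        _ = ((U d n m (n - k)).ncard + k * 2 ^ d) + 2 ^ d * a := by ring
        _ = (a + k * (2 ^ d * a)) + 2 ^ d * a := by rw [ih]
        _ = a + (k + 1) * (2 ^ d * a) := by ring
  have h1 := key (n - 1) (le_refl _)
  have h2 : n - (n - 1) = 1 := by omega
  rw [h2] at h1
  rw [v_succ_eq_U]
  exact h1

end VicsekAux

theorem stmt_13 (d n m : ℕ) (hd : 2 ≤ d) (hn : 2 ≤ n) :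
    (vicsekV d n m).ncard = (2 ^ d * n - 2 ^ d + 1) ^ m * (2 ^ d - 1) + 1 := by
  have hd1 : 1 ≤ d := by omega
  have hp : 1 ≤ 2 ^ d := Nat.one_le_two_pow
  have hK : 2 ^ d * n - 2 ^ d + 1 = (n - 1) * 2 ^ d + 1 := by
    have : 2 ^ d * n - 2 ^ d = 2 ^ d * (n - 1) := by
      rw [Nat.mul_sub, Nat.mul_one]
    rw [this, Nat.mul_comm]
  induction m with
  | zero =>
    show (vicsekCorners d).ncard = _
    rw [VicsekAux.corners_ncard]
    simp only [pow_zero, one_mul]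
    omega
  | succ m ih =>
    have hrec := VicsekAux.main_rec hd1 hn m
    rw [ih] at hrec
    set b := (2 ^ d * n - 2 ^ d + 1) ^ m * (2 ^ d - 1) with hb
    set c := (n - 1) * 2 ^ d with hc
    have e1 : (n - 1) * (2 ^ d * (b + 1)) = c * b + c := by rw [hc]; ring
    rw [e1] at hrec
    have e2 : (2 ^ d * n - 2 ^ d + 1) ^ (m + 1) * (2 ^ d - 1) = c * b + b := by
      rw [pow_succ, Nat.mul_comm ((2 ^ d * n - 2 ^ d + 1) ^ m), Nat.mul_assoc, ← hb, hK]
      ring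
    rw [e2]
    -- hrec : X + c = b + 1 + (c * b + c), goal : X = c * b + b + 1
    omega
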